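/- Let a ∈ ℐ be an inner index with dimension θ(a) = 1. Then the representable set 𝕋_V(θ) equals the representable set 𝕋_{V⊖a}(θ'), where V⊖a = (v_1 \ {a}, …, v_M \ {a}) is obtained by deleting a from every vertex, the inner index set becomes ℐ \ {a}, and θ' is the restriction of θ to ι \ {a}. -/
import Mathlib


noncomputable section

/-- The space of real tensors indexed by the indices in the vertex `v`, where an index
`a` (either outer, in `ιO`, or inner, in `ιI`) has dimension `Sum.elim θO θI a`. -/
def Tensor {ιO ιI : Type*} (θO : ιO → ℕ) (θI : ιI → ℕ) (v : Finset (ιO ⊕ ιI)) : Type _ :=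
  ((a : v) → Fin (Sum.elim θO θI a.1)) → ℝ

/-- The combined assignment of an outer assignment `x` and an inner assignment `y`. -/
def combine {ιO ιI : Type*} (θO : ιO → ℕ) (θI : ιI → ℕ)
    (x : (a : ιO) → Fin (θO a)) (y : (a : ιI) → Fin (θI a)) :
    (a : ιO ⊕ ιI) → Fin (Sum.elim θO θI a)
  | .inl o => x o
  | .inr i => y i

/-- The contraction `F_V` of the tensors `U m` along the vertex list `V`:
`F_V(U)(x) = Σ_y Π_m U m ((x,y)|_{V m})`. -/
def contract {ιO ιI : Type*} [Fintype ιO] [Fintype ιI] [DecidableEq ιO] [DecidableEq ιI]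
    (θO : ιO → ℕ) (θI : ιI → ℕ) {κ : Type*} [Fintype κ]
    (V : κ → Finset (ιO ⊕ ιI)) (U : (m : κ) → Tensor θO θI (V m)) :
    ((a : ιO) → Fin (θO a)) → ℝ :=
  fun x => ∑ y : (a : ιI) → Fin (θI a), ∏ m, U m (fun a => combine θO θI x y a.1)

/-- The representable set `𝕋_V(θ)`: the image of the contraction map `F_V`. -/
def reprSet {ιO ιI : Type*} [Fintype ιO] [Fintype ιI] [DecidableEq ιO] [DecidableEq ιI]
    (θO : ιO → ℕ) (θI : ιI → ℕ) {κ : Type*} [Fintype κ] (V : κ → Finset (ιO ⊕ ιI)) :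
    Set (((a : ιO) → Fin (θO a)) → ℝ) :=
  Set.range (contract θO θI V)

end

noncomputable section Aux

variable {ιO ιI : Type*} [Fintype ιO] [Fintype ιI] [DecidableEq ιO] [DecidableEq ιI]
  (θO : ιO → ℕ) (θI : ιI → ℕ) (a : ιI)

/-- Equivalence between full inner assignments and assignments avoiding `a`. -/
def eAsg (ha : θI a = 1) :
    ((i : ιI) → Fin (θI i)) ≃ ((b : {x : ιI // x ≠ a}) → Fin (θI b.1)) where
  toFun y b := y b.1
  invFun y' i := if h : i = a then ⟨0, by simp [h, ha]⟩ else y' ⟨i, h⟩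
  left_inv y := by
    funext i
    by_cases h : i = a
    · have : Subsingleton (Fin (θI i)) := by rw [h, ha]; infer_instance
      exact Subsingleton.elim _ _
    · simp [h]
  right_inv y' := by
    funext b
    simp [b.2]

def extT {M : ℕ} (V : Fin M → Finset (ιO ⊕ ιI)) (m : Fin M) (ha : θI a = 1)
    (w : (b : {b : ιO ⊕ {x : ιI // x ≠ a} //
        b ∈ Finset.univ.filter (fun b => Sum.map id Subtype.val b ∈ V m)}) →
      Fin (Sum.elim θO (fun b => θI b.1) b.1)) :
    (c : {c : ιO ⊕ ιI // c ∈ V m}) → Fin (Sum.elim θO θI c.1) :=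
  fun c => match c with
  | ⟨.inl o, hc⟩ => w ⟨.inl o, by simpa using hc⟩
  | ⟨.inr i, hc⟩ =>
    if h : i = a then ⟨0, by simp [h, ha]⟩
    else w ⟨.inr ⟨i, h⟩, by simpa using hc⟩

def resT {M : ℕ} (V : Fin M → Finset (ιO ⊕ ιI)) (m : Fin M)
    (z : (c : {c : ιO ⊕ ιI // c ∈ V m}) → Fin (Sum.elim θO θI c.1)) :
    (b : {b : ιO ⊕ {x : ιI // x ≠ a} //
        b ∈ Finset.univ.filter (fun b => Sum.map id Subtype.val b ∈ V m)}) →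
      Fin (Sum.elim θO (fun b => θI b.1) b.1) :=
  fun b => match b with
  | ⟨.inl o, hb⟩ => z ⟨.inl o, by simpa using hb⟩
  | ⟨.inr i, hb⟩ => z ⟨.inr i.1, by simpa using hb⟩

end Aux

/-- Proposition 1, rank-one inner index elimination: if an inner index
`a` has dimension `θI a = 1`, then the representable set `𝕋_V(θ)` equals the representable
set of the vertex list `V ⊖ a` obtained by deleting `a` from every vertex, over the inner
index set `ιI \ {a}` with `θ` restricted to it. -/
theorem reprSet_eq_of_dim_one {ιO ιI : Type*} [Fintype ιO] [Fintype ιI]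
    [DecidableEq ιO] [DecidableEq ιI]
    (θO : ιO → ℕ) (θI : ιI → ℕ) {M : ℕ} (V : Fin M → Finset (ιO ⊕ ιI))
    (a : ιI) (ha : θI a = 1) :
    reprSet θO θI V =
      reprSet θO (fun b : {x : ιI // x ≠ a} => θI b.1)
        (fun m => Finset.univ.filter
          (fun b : ιO ⊕ {x : ιI // x ≠ a} => Sum.map id Subtype.val b ∈ V m)) := by
  apply Set.eq_of_subset_of_subset
  · rintro _ ⟨U, rfl⟩
    refine ⟨fun m w => U m (extT θO θI a V m ha w), ?_⟩
    funext x
    simp only [contract]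
    refine Fintype.sum_equiv (eAsg θI a ha).symm _ _ fun y' => ?_
    refine Finset.prod_congr rfl fun m _ => ?_
    congr 1
    funext c
    obtain ⟨(o | i), hc⟩ := c
    · rfl
    · show extT θO θI a V m ha (fun b => combine θO _ x y' b.1) ⟨Sum.inr i, hc⟩ =
        combine θO θI x ((eAsg θI a ha).symm y') (Sum.inr i)
      by_cases h : i = a
      · have : Subsingleton (Fin (θI i)) := by rw [h, ha]; infer_instance
        exact Subsingleton.elim (α := Fin (θI i)) _ _
      · simp [extT, eAsg, h, combine]
  · rintro _ ⟨W, rfl⟩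
    refine ⟨fun m z => W m (resT θO θI a V m z), ?_⟩
    funext x
    simp only [contract]
    refine Fintype.sum_equiv (eAsg θI a ha) _ _ fun y => ?_
    refine Finset.prod_congr rfl fun m _ => ?_
    congr 1
    funext b
    obtain ⟨(o | i), hb⟩ := b
    · rfl
    · rfl
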